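/- Let p be a prime not dividing m, s ≥ 2, and let C ⊆ (ℤ_{mp^s})^n be a code with minimum Hamming distance d. Then the minimum Hamming distance d' of Ψ_p(C) ⊆ (ℤ_{mp})^{n·p^{s-1}} satisfies d·(p−1)·p^{s−2} ≤ d' ≤ d·p^{s−1}. -/

import Mathlib

/-- The `j`-th base-`p` digit of `x`, as an element of `ℤ_p`. -/
def digitZ (p x j : ℕ) : ZMod p := ((x / p ^ j) % p : ℕ)

/-- Logarithmic form of the matrix `D = [ζ_p^{v·wᵀ}]_{v,w ∈ (ℤ_p)^{s-1}}`:
the entry in row `b` and column `w` (rows and columns indexed by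
`0,…,p^{s-1}-1` via the base-`p` digit vectors) is the standard inner product
mod `p` of the digit vectors of `b` and `w`. -/
def LDrow (p s b w : ℕ) : ZMod p :=
  ∑ j ∈ Finset.range (s - 1), digitZ p b j * digitZ p w j

/-- The generalized Gray map `Φ : ℤ_{p^s} → (ℤ_p)^{p^{s-1}}`,
`Φ(a·p^{s-1} + b) = [L(D)]_b + a·𝟙`. -/
def grayMap (p s : ℕ) (x : ZMod (p ^ s)) (i : Fin (p ^ (s - 1))) : ZMod p :=
  LDrow p s (x.val % p ^ (s - 1)) i.val + ((x.val / p ^ (s - 1) : ℕ) : ZMod p)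

open Finset

lemma digit_decomp (p i j0 : ℕ) :
    i = (i / p ^ (j0+1)) * p ^ (j0+1) + (i / p ^ j0 % p) * p ^ j0 + i % p ^ j0 := by
  have h3 : i / p ^ (j0+1) = i / p ^ j0 / p := by
    rw [Nat.div_div_eq_div_mul, pow_succ]
  rw [h3, pow_succ]
  conv_lhs => rw [← Nat.div_add_mod i (p ^ j0), ← Nat.div_add_mod (i / p ^ j0) p]
  ring

lemma digit_of_mod (p i j0 j : ℕ) (hj : j < j0) :
    (i % p ^ j0) / p ^ j % p = i / p ^ j % p := by
  rw [← Nat.mod_mul_right_div_self, ← Nat.mod_mul_right_div_self, ← pow_succ,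
    Nat.mod_mod_of_dvd _ (pow_dvd_pow p hj)]

lemma digit_of_div (p i j0 j : ℕ) (hj : j0 < j) :
    (i / p ^ (j0+1)) / p ^ (j - (j0+1)) % p = i / p ^ j % p := by
  rw [Nat.div_div_eq_div_mul, ← pow_add]
  have : j0 + 1 + (j - (j0+1)) = j := by omega
  rw [this]

lemma digits_inj (p : ℕ) (hp : 1 < p) :
    ∀ k i i', i < p^k → i' < p^k → (∀ j < k, i / p^j % p = i' / p^j % p) → i = i' := by
  intro k
  induction k with
  | zero => intro i i' hi hi' _; simp at hi hi'; omega
  | succ k ih =>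
    intro i i' hi hi' h
    have h0 : i % p = i' % p := by simpa using h 0 (Nat.succ_pos k)
    have hdiv : i / p = i' / p := by
      apply ih
      · exact Nat.div_lt_of_lt_mul (by rw [mul_comm, ← pow_succ]; exact hi)
      · exact Nat.div_lt_of_lt_mul (by rw [mul_comm, ← pow_succ]; exact hi')
      · intro j hj
        have e1 : i / p / p ^ j = i / p ^ (j+1) := by
          rw [Nat.div_div_eq_div_mul, ← pow_succ']
        have e2 : i' / p / p ^ j = i' / p ^ (j+1) := by
          rw [Nat.div_div_eq_div_mul, ← pow_succ']
        rw [e1, e2]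
        exact h (j+1) (by omega)
    rw [← Nat.div_add_mod i p, ← Nat.div_add_mod i' p, hdiv, h0]

lemma count_le (p k j0 : ℕ) (hp : p.Prime) (hj0 : j0 < k) (c : ℕ → ZMod p)
    (hc : c j0 ≠ 0) (t : ZMod p) :
    ((Finset.range (p^k)).filter
      (fun i => ∑ j ∈ Finset.range k, c j * digitZ p i j = t)).card ≤ p^(k-1) := by
  haveI := Fact.mk hp
  have hp1 : 1 < p := hp.one_lt
  have hppos : 0 < p := hp.pos
  refine le_trans (Finset.card_le_card_of_injOn
    (fun i => (i / p^(j0+1)) * p^j0 + i % p^j0)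
    (t := Finset.range (p^(k-1))) ?_ ?_) (by rw [Finset.card_range])
  · intro i hi
    have hik : i < p^k := Finset.mem_range.mp (Finset.mem_filter.mp hi).1
    have hd : i / p^(j0+1) < p^(k-1-j0) := by
      apply Nat.div_lt_of_lt_mul
      rw [← pow_add]
      have : j0 + 1 + (k - 1 - j0) = k := by omega
      rw [this]; exact hik
    have hmod : i % p^j0 < p^j0 := Nat.mod_lt _ (pow_pos hppos _)
    rw [Finset.mem_coe, Finset.mem_range]
    calc (i / p^(j0+1)) * p^j0 + i % p^j0 < (i / p^(j0+1) + 1) * p^j0 := by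
          rw [add_mul, one_mul]; omega
      _ ≤ p^(k-1-j0) * p^j0 := Nat.mul_le_mul_right _ hd
      _ = p^(k-1) := by rw [← pow_add]; congr 1; omega
  · intro i hi i' hi' heq
    simp only [Finset.coe_filter, Set.mem_setOf_eq, Finset.mem_range] at hi hi'
    obtain ⟨hik, hsi⟩ := hi
    obtain ⟨hik', hsi'⟩ := hi'
    simp only at heq
    have hmlt : i % p^j0 < p^j0 := Nat.mod_lt _ (pow_pos hppos _)
    have hmlt' : i' % p^j0 < p^j0 := Nat.mod_lt _ (pow_pos hppos _)
    have hm : i % p^j0 = i' % p^j0 := by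
      have h2 := congrArg (· % p^j0) heq
      rw [add_comm (i / p ^ (j0+1) * p ^ j0), add_comm (i' / p ^ (j0+1) * p ^ j0)] at h2
      rwa [Nat.add_mul_mod_self_right, Nat.add_mul_mod_self_right,
        Nat.mod_eq_of_lt hmlt, Nat.mod_eq_of_lt hmlt'] at h2
    have hdd : i / p^(j0+1) = i' / p^(j0+1) := by
      have h3 := congrArg (· / p^j0) heq
      rw [add_comm (i / p ^ (j0+1) * p ^ j0), add_comm (i' / p ^ (j0+1) * p ^ j0)] at h3
      rwa [Nat.add_mul_div_right _ _ (pow_pos hppos j0),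
        Nat.add_mul_div_right _ _ (pow_pos hppos j0),
        Nat.div_eq_of_lt hmlt, Nat.div_eq_of_lt hmlt', zero_add, zero_add] at h3
    have hdig : ∀ j < k, j ≠ j0 → i / p^j % p = i' / p^j % p := by
      intro j hj hne
      rcases lt_or_gt_of_ne hne with h | h
      · rw [← digit_of_mod p i j0 j h, ← digit_of_mod p i' j0 j h, hm]
      · rw [← digit_of_div p i j0 j h, ← digit_of_div p i' j0 j h, hdd]
    have hj0mem : j0 ∈ Finset.range k := Finset.mem_range.mpr hj0
    have hsum := hsi.trans hsi'.symm
    rw [← Finset.add_sum_erase _ _ hj0mem, ← Finset.add_sum_erase _ _ hj0mem] at hsum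
    have herase : ∑ j ∈ (Finset.range k).erase j0, c j * digitZ p i j
        = ∑ j ∈ (Finset.range k).erase j0, c j * digitZ p i' j := by
      apply Finset.sum_congr rfl
      intro j hj
      have hjne := Finset.ne_of_mem_erase hj
      have hjk := Finset.mem_range.mp (Finset.mem_of_mem_erase hj)
      unfold digitZ
      rw [hdig j hjk hjne]
    rw [herase] at hsum
    have hc0 : c j0 * digitZ p i j0 = c j0 * digitZ p i' j0 := by
      exact add_right_cancel hsum
    have hdz : digitZ p i j0 = digitZ p i' j0 := mul_left_cancel₀ hc hc0
    have : NeZero p := ⟨hppos.ne'⟩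
    have hdnat : i / p^j0 % p = i' / p^j0 % p := by
      have h1 := congrArg ZMod.val hdz
      unfold digitZ at h1
      rwa [ZMod.val_cast_of_lt (Nat.mod_lt _ hppos),
        ZMod.val_cast_of_lt (Nat.mod_lt _ hppos)] at h1
    rw [digit_decomp p i j0, digit_decomp p i' j0, hm, hdd, hdnat]

lemma hammingDist_eq {ι : Type*} {α : Type*} [Fintype ι] [DecidableEq α]
    (f g : ι → α) : hammingDist f g = (Finset.univ.filter fun i => f i ≠ g i).card := rfl

lemma gray_dist (p s : ℕ) (hp : p.Prime) (hs : 2 ≤ s) (x y : ZMod (p^s)) (hxy : x ≠ y) :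
    p^(s-1) - p^(s-2) ≤ hammingDist (grayMap p s x) (grayMap p s y) := by
  haveI := Fact.mk hp
  have hppos : 0 < p := hp.pos
  haveI : NeZero p := ⟨hppos.ne'⟩
  haveI : NeZero (p^s) := ⟨pow_ne_zero _ hppos.ne'⟩
  have hax : x.val / p^(s-1) < p := by
    apply Nat.div_lt_of_lt_mul
    rw [← pow_succ]
    have : s - 1 + 1 = s := by omega
    rw [this]; exact x.val_lt
  have hay : y.val / p^(s-1) < p := by
    apply Nat.div_lt_of_lt_mul
    rw [← pow_succ]
    have : s - 1 + 1 = s := by omega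
    rw [this]; exact y.val_lt
  rw [hammingDist_eq]
  by_cases hb : x.val % p^(s-1) = y.val % p^(s-1)
  · -- all entries differ
    have ha : x.val / p^(s-1) ≠ y.val / p^(s-1) := by
      intro h
      apply hxy
      apply ZMod.val_injective
      rw [← Nat.div_add_mod x.val (p^(s-1)), ← Nat.div_add_mod y.val (p^(s-1)), h, hb]
    have hall : ∀ i : Fin (p^(s-1)), grayMap p s x i ≠ grayMap p s y i := by
      intro i h
      unfold grayMap at h
      rw [hb] at h
      have h2 : ((x.val / p^(s-1) : ℕ) : ZMod p) = ((y.val / p^(s-1) : ℕ) : ZMod p) :=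
        add_left_cancel h
      apply ha
      rw [← ZMod.val_cast_of_lt hax, ← ZMod.val_cast_of_lt hay, h2]
    rw [Finset.filter_eq_self.mpr (fun i _ => hall i)]
    simp only [Finset.card_univ, Fintype.card_fin]
    exact Nat.sub_le _ _
  · -- digits differ somewhere
    have hbx : x.val % p^(s-1) < p^(s-1) := Nat.mod_lt _ (pow_pos hppos _)
    have hby : y.val % p^(s-1) < p^(s-1) := Nat.mod_lt _ (pow_pos hppos _)
    obtain ⟨j0, hj0, hdne⟩ : ∃ j0 < s-1,
        (x.val % p^(s-1)) / p^j0 % p ≠ (y.val % p^(s-1)) / p^j0 % p := by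
      by_contra h
      push_neg at h
      exact hb (digits_inj p hp.one_lt (s-1) _ _ hbx hby h)
    set c : ℕ → ZMod p := fun j => digitZ p (x.val % p^(s-1)) j - digitZ p (y.val % p^(s-1)) j
      with hc_def
    have hc : c j0 ≠ 0 := by
      rw [hc_def]
      simp only [sub_ne_zero]
      unfold digitZ
      intro h
      apply hdne
      rw [← ZMod.val_cast_of_lt (Nat.mod_lt ((x.val % p^(s-1)) / p^j0) hppos),
        ← ZMod.val_cast_of_lt (Nat.mod_lt ((y.val % p^(s-1)) / p^j0) hppos), h]
    set tt : ZMod p := ((y.val / p^(s-1) : ℕ) : ZMod p) - ((x.val / p^(s-1) : ℕ) : ZMod p)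
      with ht_def
    have hiff : ∀ i : Fin (p^(s-1)), (grayMap p s x i = grayMap p s y i) ↔
        (∑ j ∈ Finset.range (s-1), c j * digitZ p i.val j = tt) := by
      intro i
      rw [hc_def, ht_def]
      unfold grayMap LDrow
      simp only [sub_mul, Finset.sum_sub_distrib]
      constructor <;> intro h <;> linear_combination h
    have hcount := count_le p (s-1) j0 hp hj0 c hc tt
    have hcard : (Finset.univ.filter fun i : Fin (p^(s-1)) =>
        grayMap p s x i = grayMap p s y i).card ≤ p^(s-2) := by
      refine le_trans (Finset.card_le_card_of_injOn (fun i => i.val)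
        (t := (Finset.range (p^(s-1))).filter
          (fun i => ∑ j ∈ Finset.range (s-1), c j * digitZ p i j = tt)) ?_ ?_) ?_
      · intro i hi
        rw [Finset.mem_coe, Finset.mem_filter]
        exact ⟨Finset.mem_range.mpr i.isLt, (hiff i).mp (Finset.mem_filter.mp hi).2⟩
      · intro i _ i' _ h
        exact Fin.val_injective h
      · have : s - 1 - 1 = s - 2 := by omega
        rwa [this] at hcount
    have hsplit := Finset.card_filter_add_card_filter_not
      (s := (Finset.univ : Finset (Fin (p^(s-1)))))
      (fun i => grayMap p s x i = grayMap p s y i)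
    simp only [Finset.card_univ, Fintype.card_fin] at hsplit
    have : (Finset.univ.filter fun i : Fin (p^(s-1)) =>
        ¬ grayMap p s x i = grayMap p s y i).card = p^(s-1) -
        (Finset.univ.filter fun i : Fin (p^(s-1)) =>
        grayMap p s x i = grayMap p s y i).card := by omega
    simp only [ne_eq]
    rw [this]
    exact Nat.sub_le_sub_left hcard _

lemma zmod_rep (p s m : ℕ) (hp : p.Prime) (hm : 0 < m) (hpm : ¬ p ∣ m)
    (x : ZMod (m * p^s)) :
    ∃ a b, a < m ∧ b < p^s ∧ x = ((a * p^s + b * m : ℕ) : ZMod (m * p^s)) := by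
  haveI : NeZero m := ⟨hm.ne'⟩
  haveI : NeZero (p^s) := ⟨pow_ne_zero _ hp.pos.ne'⟩
  haveI : NeZero (m * p^s) := ⟨mul_ne_zero hm.ne' (pow_ne_zero _ hp.pos.ne')⟩
  have cop : Nat.Coprime m (p^s) :=
    Nat.Coprime.pow_right s (hp.coprime_iff_not_dvd.mpr hpm).symm
  set a := ((x.val : ZMod m) * ((p^s : ℕ) : ZMod m)⁻¹).val with ha_def
  set b := ((x.val : ZMod (p^s)) * ((m : ℕ) : ZMod (p^s))⁻¹).val with hb_def
  refine ⟨a, b, ZMod.val_lt _, ZMod.val_lt _, ?_⟩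
  conv_lhs => rw [← ZMod.natCast_zmod_val x]
  rw [ZMod.natCast_eq_natCast_iff, ← Nat.modEq_and_modEq_iff_modEq_mul cop]
  constructor
  · have hu : IsUnit ((p^s : ℕ) : ZMod m) := (ZMod.isUnit_iff_coprime (p^s) m).mpr cop.symm
    rw [← ZMod.natCast_eq_natCast_iff]
    rw [Nat.cast_add, Nat.cast_mul, Nat.cast_mul, ZMod.natCast_self, mul_zero, add_zero,
      ha_def, ZMod.natCast_zmod_val, mul_assoc, ZMod.inv_mul_of_unit _ hu, mul_one]
  · have hu : IsUnit ((m : ℕ) : ZMod (p^s)) := (ZMod.isUnit_iff_coprime m (p^s)).mpr cop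
    rw [← ZMod.natCast_eq_natCast_iff]
    rw [Nat.cast_add, Nat.cast_mul, Nat.cast_mul, ZMod.natCast_self, mul_zero, zero_add,
      hb_def, ZMod.natCast_zmod_val, mul_assoc, ZMod.inv_mul_of_unit _ hu, mul_one]

lemma entry_eq_iff (p m : ℕ) (hp : p.Prime) (hm : 0 < m) (hpm : ¬ p ∣ m)
    (v v' a a' : ℕ) (hv : v < p) (hv' : v' < p) (ha : a < m) (ha' : a' < m) :
    ((m * v + a * p : ℕ) : ZMod (m * p)) = ((m * v' + a' * p : ℕ) : ZMod (m * p))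
      ↔ (v = v' ∧ a = a') := by
  haveI := Fact.mk hp
  haveI : NeZero m := ⟨hm.ne'⟩
  haveI : NeZero p := ⟨hp.pos.ne'⟩
  have cop : Nat.Coprime m p := (hp.coprime_iff_not_dvd.mpr hpm).symm
  constructor
  · intro h
    rw [ZMod.natCast_eq_natCast_iff, ← Nat.modEq_and_modEq_iff_modEq_mul cop] at h
    obtain ⟨h1, h2⟩ := h
    constructor
    · have h2' := (ZMod.natCast_eq_natCast_iff _ _ _).mpr h2
      rw [Nat.cast_add, Nat.cast_add, Nat.cast_mul, Nat.cast_mul, Nat.cast_mul, Nat.cast_mul,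
        ZMod.natCast_self] at h2'
      simp only [mul_zero, add_zero] at h2'
      have hu : IsUnit ((m : ℕ) : ZMod p) := (ZMod.isUnit_iff_coprime m p).mpr cop
      have hvv : ((v : ℕ) : ZMod p) = ((v' : ℕ) : ZMod p) := mul_left_cancel₀ hu.ne_zero h2'
      rw [← ZMod.val_cast_of_lt hv, ← ZMod.val_cast_of_lt hv', hvv]
    · have h1' := (ZMod.natCast_eq_natCast_iff _ _ _).mpr h1
      rw [Nat.cast_add, Nat.cast_add, Nat.cast_mul, Nat.cast_mul, Nat.cast_mul, Nat.cast_mul,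
        ZMod.natCast_self] at h1'
      simp only [zero_mul, zero_add] at h1'
      have hu : IsUnit ((p : ℕ) : ZMod m) := (ZMod.isUnit_iff_coprime p m).mpr cop.symm
      have haa : ((a : ℕ) : ZMod m) = ((a' : ℕ) : ZMod m) := hu.mul_right_cancel h1'
      rw [← ZMod.val_cast_of_lt ha, ← ZMod.val_cast_of_lt ha', haa]
  · rintro ⟨rfl, rfl⟩; rfl

lemma psi_dist (p s m : ℕ) (hp : p.Prime) (hs : 2 ≤ s) (hm : 0 < m) (hpm : ¬ p ∣ m)
    (Psi : ZMod (m * p ^ s) → Fin (p ^ (s - 1)) → ZMod (m * p))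
    (hPsi : ∀ a b : ℕ, a < m → b < p ^ s → ∀ i,
      Psi ((a * p ^ s + b * m : ℕ) : ZMod (m * p ^ s)) i =
        ((m * (grayMap p s ((b : ℕ) : ZMod (p ^ s)) i).val + a * p : ℕ) : ZMod (m * p)))
    (x y : ZMod (m * p ^ s)) (hxy : x ≠ y) :
    p^(s-1) - p^(s-2) ≤ hammingDist (Psi x) (Psi y) := by
  haveI : NeZero p := ⟨hp.pos.ne'⟩
  haveI : NeZero (p^s) := ⟨pow_ne_zero _ hp.pos.ne'⟩
  obtain ⟨a, b, ha, hb, hx⟩ := zmod_rep p s m hp hm hpm x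
  obtain ⟨a', b', ha', hb', hy⟩ := zmod_rep p s m hp hm hpm y
  have hxe : ∀ i, Psi x i
      = ((m * (grayMap p s ((b : ℕ) : ZMod (p ^ s)) i).val + a * p : ℕ) : ZMod (m * p)) := by
    intro i; rw [hx]; exact hPsi a b ha hb i
  have hye : ∀ i, Psi y i
      = ((m * (grayMap p s ((b' : ℕ) : ZMod (p ^ s)) i).val + a' * p : ℕ) : ZMod (m * p)) := by
    intro i; rw [hy]; exact hPsi a' b' ha' hb' i
  have hentry : ∀ i, (Psi x i = Psi y i) ↔
      (grayMap p s ((b : ℕ) : ZMod (p ^ s)) i = grayMap p s ((b' : ℕ) : ZMod (p ^ s)) i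
        ∧ a = a') := by
    intro i
    rw [hxe i, hye i,
      entry_eq_iff p m hp hm hpm _ _ _ _ (ZMod.val_lt _) (ZMod.val_lt _) ha ha']
    constructor
    · rintro ⟨h1, h2⟩; exact ⟨ZMod.val_injective _ h1, h2⟩
    · rintro ⟨h1, h2⟩; exact ⟨by rw [h1], h2⟩
  by_cases haa : a = a'
  · have hbnat : b ≠ b' := by
      intro h; apply hxy; rw [hx, hy, h, haa]
    have hbb : ((b : ℕ) : ZMod (p^s)) ≠ ((b' : ℕ) : ZMod (p^s)) := by
      intro h; apply hbnat
      rw [← ZMod.val_cast_of_lt hb, ← ZMod.val_cast_of_lt hb', h]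
    have hgd := gray_dist p s hp hs _ _ hbb
    rw [hammingDist_eq] at hgd ⊢
    refine le_trans hgd (le_of_eq (congrArg Finset.card (Finset.filter_congr fun i _ => ?_)))
    simp only [ne_eq, hentry i, haa, and_true]
  · have hall : ∀ i, Psi x i ≠ Psi y i := fun i h => haa ((hentry i).mp h).2
    rw [hammingDist_eq, Finset.filter_eq_self.mpr (fun i _ => hall i)]
    simp only [Finset.card_univ, Fintype.card_fin]
    exact Nat.sub_le _ _


/-- Let `C ⊆ (ℤ_{mp^s})^n` (`p` prime, `p ∤ m`) be a code with minimum
Hamming distance `d`.  Then the minimum Hamming distance `d'` of the image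
code `Ψ_p(C) ⊆ (ℤ_{mp})^{n·p^{s-1}}` (entrywise application of `Ψ_p`)
satisfies `d·(p−1)·p^{s−2} ≤ d' ≤ d·p^{s−1}`. -/

theorem psi_min_distance_bounds (p s m n : ℕ) (hp : p.Prime) (hs : 2 ≤ s)
    (hm : 0 < m) (hpm : ¬ p ∣ m)
    (Psi : ZMod (m * p ^ s) → Fin (p ^ (s - 1)) → ZMod (m * p))
    (hPsi : ∀ a b : ℕ, a < m → b < p ^ s → ∀ i,
      Psi ((a * p ^ s + b * m : ℕ) : ZMod (m * p ^ s)) i =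
        ((m * (grayMap p s ((b : ℕ) : ZMod (p ^ s)) i).val + a * p : ℕ) : ZMod (m * p)))
    (C : Set (Fin n → ZMod (m * p ^ s))) (d d' : ℕ)
    (hd_le : ∀ x ∈ C, ∀ y ∈ C, x ≠ y → d ≤ hammingDist x y)
    (hd_eq : ∃ x ∈ C, ∃ y ∈ C, x ≠ y ∧ hammingDist x y = d)
    (hd'_le : ∀ x ∈ C, ∀ y ∈ C, x ≠ y →
      d' ≤ hammingDist (fun ji : Fin n × Fin (p ^ (s - 1)) => Psi (x ji.1) ji.2)
        (fun ji : Fin n × Fin (p ^ (s - 1)) => Psi (y ji.1) ji.2))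
    (hd'_eq : ∃ x ∈ C, ∃ y ∈ C, x ≠ y ∧
      hammingDist (fun ji : Fin n × Fin (p ^ (s - 1)) => Psi (x ji.1) ji.2)
        (fun ji : Fin n × Fin (p ^ (s - 1)) => Psi (y ji.1) ji.2) = d') :
    d * (p - 1) * p ^ (s - 2) ≤ d' ∧ d' ≤ d * p ^ (s - 1) := by
  have hprod : ∀ x y : Fin n → ZMod (m * p ^ s),
      hammingDist (fun ji : Fin n × Fin (p ^ (s - 1)) => Psi (x ji.1) ji.2)
        (fun ji : Fin n × Fin (p ^ (s - 1)) => Psi (y ji.1) ji.2)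
      = ∑ i : Fin n, hammingDist (Psi (x i)) (Psi (y i)) := by
    intro x y
    simp only [hammingDist_eq, Finset.card_filter, Fintype.sum_prod_type]
  have hpow : (p - 1) * p ^ (s - 2) = p ^ (s - 1) - p ^ (s - 2) := by
    rw [Nat.sub_mul, one_mul]
    congr 1
    rw [← pow_succ']
    congr 1
    omega
  constructor
  · obtain ⟨x, hxC, y, hyC, hxy, hdist⟩ := hd'_eq
    have hsum : d' = ∑ i : Fin n, hammingDist (Psi (x i)) (Psi (y i)) := by
      rw [← hdist, hprod]
    have hDd : d ≤ (Finset.univ.filter fun i => x i ≠ y i).card := by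
      rw [← hammingDist_eq]; exact hd_le x hxC y hyC hxy
    have h1 : (Finset.univ.filter fun i => x i ≠ y i).card * (p^(s-1) - p^(s-2))
        ≤ ∑ i ∈ Finset.univ.filter fun i => x i ≠ y i,
            hammingDist (Psi (x i)) (Psi (y i)) := by
      have := Finset.card_nsmul_le_sum (Finset.univ.filter fun i => x i ≠ y i)
        (fun i => hammingDist (Psi (x i)) (Psi (y i))) (p^(s-1) - p^(s-2))
        (fun i hi => psi_dist p s m hp hs hm hpm Psi hPsi _ _
          ((Finset.mem_filter.mp hi).2))
      simpa [smul_eq_mul] using this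
    have h2 : ∑ i ∈ Finset.univ.filter fun i => x i ≠ y i,
          hammingDist (Psi (x i)) (Psi (y i))
        ≤ ∑ i : Fin n, hammingDist (Psi (x i)) (Psi (y i)) :=
      Finset.sum_le_sum_of_subset (Finset.subset_univ _)
    calc d * (p - 1) * p ^ (s - 2) = d * (p^(s-1) - p^(s-2)) := by
          rw [mul_assoc, hpow]
      _ ≤ (Finset.univ.filter fun i => x i ≠ y i).card * (p^(s-1) - p^(s-2)) :=
          Nat.mul_le_mul_right _ hDd
      _ ≤ _ := h1
      _ ≤ _ := h2
      _ = d' := hsum.symm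
  · obtain ⟨x, hxC, y, hyC, hxy, hdist⟩ := hd_eq
    refine le_trans (hd'_le x hxC y hyC hxy) ?_
    rw [hprod x y]
    have hzero : ∀ i ∈ (Finset.univ : Finset (Fin n)),
        hammingDist (Psi (x i)) (Psi (y i)) ≠ 0 → x i ≠ y i := by
      intro i _ hne heq
      exact hne (by rw [heq, hammingDist_self])
    rw [← Finset.sum_filter_of_ne hzero]
    have hcard : (Finset.univ.filter fun i => x i ≠ y i).card = d := by
      rw [← hammingDist_eq]; exact hdist
    calc ∑ i ∈ Finset.univ.filter fun i => x i ≠ y i,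
          hammingDist (Psi (x i)) (Psi (y i))
        ≤ (Finset.univ.filter fun i => x i ≠ y i).card * p ^ (s-1) := by
          have := Finset.sum_le_card_nsmul (Finset.univ.filter fun i => x i ≠ y i)
            (fun i => hammingDist (Psi (x i)) (Psi (y i))) (p^(s-1))
            (fun i _ => by
              have := hammingDist_le_card_fintype
                (x := Psi (x i)) (y := Psi (y i))
              simpa [Fintype.card_fin] using this)
          simpa [smul_eq_mul] using this
      _ = d * p ^ (s-1) := by rw [hcard]
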